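/- Let w ∈ W_n, let l = ℓ_t(w), and let 1 ≤ i_1 < ⋯ < i_l ≤ n be the unique sequence such that α_w a_l = r_{i_1} ⋯ r_{i_l}. Then α_{w_n w} a_{n−l} = r_{j_1} ⋯ r_{j_{n−l}}, where 1 ≤ j_1 < ⋯ < j_{n−l} ≤ n is the sequence such that {i_1, …, i_l} ∪ {j_1, …, j_{n−l}} = {1, …, n}. -/

import Mathlib

/-!
Common setup: the Weyl group `W n` of type `B_n`, realized as the group of
permutations `w` of `I_n = {±1, …, ±n}` (inside `Equiv.Perm ℤ`, fixing every
integer of absolute value `> n`) such that `w (-i) = - w i` for all `i`.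
-/

namespace TypeB

/-- The generator `t = (1, -1)`. -/
def t : Equiv.Perm ℤ := Equiv.swap 1 (-1)

/-- The generator `s i = (i, i+1)(-i, -(i+1))` (meaningful for `1 ≤ i`). -/
def s (i : ℕ) : Equiv.Perm ℤ :=
  Equiv.swap (i : ℤ) ((i : ℤ) + 1) * Equiv.swap (-(i : ℤ)) (-((i : ℤ) + 1))

/-- The generating set `S_n = {t, s_1, …, s_{n-1}}`. -/
def gens (n : ℕ) : Set (Equiv.Perm ℤ) :=
  {t} ∪ {x | ∃ i : ℕ, 1 ≤ i ∧ i < n ∧ x = s i}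

/-- The Weyl group `W_n` of type `B_n`, as a subgroup of `Equiv.Perm ℤ`:
permutations `w` with `w (-i) = - (w i)` for all `i` and fixing all `i` with `|i| > n`. -/
def W (n : ℕ) : Subgroup (Equiv.Perm ℤ) where
  carrier := {w | (∀ i : ℤ, w (-i) = - w i) ∧ ∀ i : ℤ, (n : ℤ) < |i| → w i = i}
  one_mem' := ⟨fun _ => rfl, fun _ _ => rfl⟩
  mul_mem' := by
    rintro u v ⟨hu1, hu2⟩ ⟨hv1, hv2⟩
    refine ⟨fun i => ?_, fun i hi => ?_⟩
    · simp only [Equiv.Perm.mul_apply, hv1, hu1]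
    · simp only [Equiv.Perm.mul_apply, hv2 i hi, hu2 i hi]
  inv_mem' := by
    rintro u ⟨hu1, hu2⟩
    refine ⟨fun i => ?_, fun i hi => ?_⟩
    · apply u.injective
      rw [(show ∀ x, u (u⁻¹ x) = x from fun x => Equiv.apply_symm_apply u x), hu1, (show ∀ x, u (u⁻¹ x) = x from fun x => Equiv.apply_symm_apply u x)]
    · apply u.injective
      rw [(show ∀ x, u (u⁻¹ x) = x from fun x => Equiv.apply_symm_apply u x), hu2 i hi]

/-- The length of `w` with respect to the generating set `S_n`. -/
noncomputable def len (n : ℕ) (w : Equiv.Perm ℤ) : ℕ :=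
  sInf {k | ∃ l : List (Equiv.Perm ℤ), (∀ x ∈ l, x ∈ gens n) ∧ l.prod = w ∧ l.length = k}

/-- `l` is a reduced expression for `w` with respect to `S_n`. -/
def IsReduced (n : ℕ) (w : Equiv.Perm ℤ) (l : List (Equiv.Perm ℤ)) : Prop :=
  (∀ x ∈ l, x ∈ gens n) ∧ l.prod = w ∧ l.length = len n w

/-- `ℓ_t w`: the number of occurrences of `t` in a reduced expression of `w`
(independent of the chosen reduced expression). -/
noncomputable def lent (n : ℕ) (w : Equiv.Perm ℤ) : ℕ :=
  letI : DecidableEq (Equiv.Perm ℤ) := Classical.decEq _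
  sInf {m | ∃ l, IsReduced n w l ∧ l.count t = m}

/-- `r 1 = t` and `r (i+1) = s i * r i`. -/
def r : ℕ → Equiv.Perm ℤ
  | 0 => 1
  | 1 => t
  | (i + 2) => s (i + 1) * r (i + 1)

/-- `t_1 = t` and `t_{i+1} = s_i * t_i * s_i`. -/
def tperm : ℕ → Equiv.Perm ℤ
  | 0 => 1
  | 1 => t
  | (i + 2) => s (i + 1) * tperm (i + 1) * s (i + 1)

/-- `a l = r 1 * r 2 * ⋯ * r l`, with `a 0 = 1`. -/
def a : ℕ → Equiv.Perm ℤ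
  | 0 => 1
  | (l + 1) => a l * r (l + 1)

/-- The symmetric group `𝔖_n`: the subgroup generated by `s_1, …, s_{n-1}`. -/
def Sym (n : ℕ) : Subgroup (Equiv.Perm ℤ) :=
  Subgroup.closure {x | ∃ i : ℕ, 1 ≤ i ∧ i < n ∧ x = s i}

/-- The parabolic subgroup `𝔖_{l,n-l}`: generated by `{s_1, …, s_{n-1}} \ {s_l}`. -/
def SymP (n l : ℕ) : Subgroup (Equiv.Perm ℤ) :=
  Subgroup.closure {x | ∃ i : ℕ, 1 ≤ i ∧ i < n ∧ i ≠ l ∧ x = s i}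

/-- `Y_{l,n-l}`: elements of `𝔖_n` of minimal length in their coset `w 𝔖_{l,n-l}`. -/
def Y (n l : ℕ) : Set (Equiv.Perm ℤ) :=
  {w | w ∈ Sym n ∧ ∀ u ∈ SymP n l, len n w ≤ len n (w * u)}

/-- The subgroup `𝔖_{[i,j]}` generated by `s_i, …, s_{j-1}`. -/
def SymI (i j : ℕ) : Subgroup (Equiv.Perm ℤ) :=
  Subgroup.closure {x | ∃ k : ℕ, i ≤ k ∧ k < j ∧ x = s k}

/-- The function reversing the interval `[i,j]` (and `[-j,-i]`), for `1 ≤ i`. -/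
def revFun (i j : ℤ) : ℤ → ℤ := fun k =>
  if 1 ≤ i ∧ i ≤ k ∧ k ≤ j then i + j - k
  else if 1 ≤ i ∧ -j ≤ k ∧ k ≤ -i then -(i + j) - k
  else k

lemma revFun_involutive (i j : ℤ) : Function.Involutive (revFun i j) := by
  intro k
  unfold revFun
  split_ifs <;> omega

/-- `σ_{[i,j]}`: the longest element of `𝔖_{[i,j]}`, i.e. the order-reversing
permutation of the interval `[i,j]` (extended to `I_n` by `w(-k) = -w(k)`). -/
def sigmaI (i j : ℕ) : Equiv.Perm ℤ := (revFun_involutive (i : ℤ) (j : ℤ)).toPerm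

/-- `σ_{l,n-l}`: the longest element of `𝔖_{l,n-l} = 𝔖_{[1,l]} × 𝔖_{[l+1,n]}`. -/
def sigmaLL (n l : ℕ) : Equiv.Perm ℤ := sigmaI 1 l * sigmaI (l + 1) n

/-- The function negating all `k` with `|k| ≤ n`. -/
def negnFun (n : ℤ) : ℤ → ℤ := fun k => if -n ≤ k ∧ k ≤ n then -k else k

lemma negnFun_involutive (n : ℤ) : Function.Involutive (negnFun n) := by
  intro k
  unfold negnFun
  split_ifs <;> omega

/-- `w_n`: the longest element of `W_n`; as a permutation, `w_n i = -i` for `|i| ≤ n`. -/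
def wlong (n : ℕ) : Equiv.Perm ℤ := (negnFun_involutive (n : ℤ)).toPerm

/-- `c_I = s_{i_1} s_{i_2} ⋯ s_{i_k}` for `I = {i_1 < i_2 < ⋯ < i_k}`. -/
def cElt (I : Finset ℕ) : Equiv.Perm ℤ := ((I.sort (· ≤ ·)).map s).prod

/-- `d_I = s_{i_k} ⋯ s_{i_2} s_{i_1}` for `I = {i_1 < i_2 < ⋯ < i_k}`. -/
def dElt (I : Finset ℕ) : Equiv.Perm ℤ := (((I.sort (· ≤ ·)).map s).reverse).prod

/-- `X_n^{(m)}`: elements of `W_n` of minimal length in their coset `w W_m`. -/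
def X (n m : ℕ) : Set (Equiv.Perm ℤ) :=
  {w | w ∈ W n ∧ ∀ u ∈ W m, len n w ≤ len n (w * u)}

/-- Bruhat order: `x ≤ y` iff some reduced expression of `y` contains a subword
which is a reduced expression of `x`. -/
def BruhatLE (n : ℕ) (x y : Equiv.Perm ℤ) : Prop :=
  ∃ ly, IsReduced n y ly ∧ ∃ lx, lx.Sublist ly ∧ IsReduced n x lx

/-- Strict Bruhat order. -/
def BruhatLT (n : ℕ) (x y : Equiv.Perm ℤ) : Prop := BruhatLE n x y ∧ x ≠ y

/-- `D_i(W_n)`: the set of `x` such that exactly one of `s_i, s_{i+1}` is a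
(right) descent of `x`. -/
def Dset (n i : ℕ) : Set (Equiv.Perm ℤ) :=
  {x | Xor' (len n (x * s i) < len n x) (len n (x * s (i + 1)) < len n x)}

open Classical in
/-- `γ_i x`: the unique element of `{x s_i, x s_{i+1}} ∩ D_i(W_n)` (for `x ∈ D_i(W_n)`). -/
noncomputable def gamma (n i : ℕ) (x : Equiv.Perm ℤ) : Equiv.Perm ℤ :=
  if x * s i ∈ Dset n i then x * s i else x * s (i + 1)

/-- `E_m^{(r)}`: the set of `w ∈ W_m` such that `|w 1| > |w i|` for `2 ≤ i ≤ r+2`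
and `(w 2, …, w (r+2))` is a shuffle of a positive decreasing sequence and a
negative increasing sequence. -/
def E (m ρ : ℕ) : Set (Equiv.Perm ℤ) :=
  {w | w ∈ W m ∧ (∀ i : ℕ, 2 ≤ i → i ≤ ρ + 2 → |w (i : ℤ)| < |w (1 : ℤ)|) ∧
    ∀ i j : ℕ, 2 ≤ i → i < j → j ≤ ρ + 2 →
      (0 < w (i : ℤ) → 0 < w (j : ℤ) → w (j : ℤ) < w (i : ℤ)) ∧
      (w (i : ℤ) < 0 → w (j : ℤ) < 0 → w (i : ℤ) < w (j : ℤ))}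

/-- The product `r_{i_1} ⋯ r_{i_l}` for a sequence `i : Fin l → ℕ`. -/
def prodR {l : ℕ} (i : Fin l → ℕ) : Equiv.Perm ℤ := (List.ofFn fun k => r (i k)).prod

/-- `(l, α, β, σ)` is a decomposition of `w` as in the decomposition lemma:
`l ≤ n`, `α, β ∈ Y_{l,n-l}`, `σ ∈ 𝔖_{l,n-l}` and `w = α a_l σ β⁻¹`. -/
def IsDecomp (n : ℕ) (w : Equiv.Perm ℤ) (l : ℕ) (α β σ : Equiv.Perm ℤ) : Prop :=
  l ≤ n ∧ α ∈ Y n l ∧ β ∈ Y n l ∧ σ ∈ SymP n l ∧ w = α * a l * σ * β⁻¹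


section Aux

lemma t_apply (x : ℤ) : t x = if x = 1 then -1 else if x = -1 then 1 else x := by
  rcases eq_or_ne x 1 with rfl | h1
  · simp [t]
  · rcases eq_or_ne x (-1) with rfl | h2
    · simp [t]
    · rw [if_neg h1, if_neg h2, t, Equiv.swap_apply_of_ne_of_ne h1 h2]

lemma s_apply {i : ℕ} (hi : 1 ≤ i) (x : ℤ) :
    s i x = if x = (i:ℤ) then (i:ℤ)+1 else if x = (i:ℤ)+1 then (i:ℤ)
      else if x = -(i:ℤ) then -((i:ℤ)+1) else if x = -((i:ℤ)+1) then -(i:ℤ) else x := by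
  have hi' : (1:ℤ) ≤ (i:ℤ) := by exact_mod_cast hi
  rw [s, Equiv.Perm.mul_apply]
  rcases eq_or_ne x (i:ℤ) with rfl | h1
  · rw [show (Equiv.swap (-(i:ℤ)) (-((i:ℤ)+1))) (i:ℤ) = (i:ℤ) from
      Equiv.swap_apply_of_ne_of_ne (by omega) (by omega), Equiv.swap_apply_left, if_pos rfl]
  · rcases eq_or_ne x ((i:ℤ)+1) with rfl | h2
    · rw [show (Equiv.swap (-(i:ℤ)) (-((i:ℤ)+1))) ((i:ℤ)+1) = (i:ℤ)+1 from
        Equiv.swap_apply_of_ne_of_ne (by omega) (by omega), Equiv.swap_apply_right,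
        if_neg h1, if_pos rfl]
    · rcases eq_or_ne x (-(i:ℤ)) with rfl | h3
      · rw [Equiv.swap_apply_left,
          show (Equiv.swap (i:ℤ) ((i:ℤ)+1)) (-((i:ℤ)+1)) = -((i:ℤ)+1) from
            Equiv.swap_apply_of_ne_of_ne (by omega) (by omega),
          if_neg h1, if_neg h2, if_pos rfl]
      · rcases eq_or_ne x (-((i:ℤ)+1)) with rfl | h4
        · rw [Equiv.swap_apply_right,
            show (Equiv.swap (i:ℤ) ((i:ℤ)+1)) (-(i:ℤ)) = -(i:ℤ) from
              Equiv.swap_apply_of_ne_of_ne (by omega) (by omega),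
            if_neg h1, if_neg h2, if_neg h3, if_pos rfl]
        · rw [show (Equiv.swap (-(i:ℤ)) (-((i:ℤ)+1))) x = x from
            Equiv.swap_apply_of_ne_of_ne h3 h4, Equiv.swap_apply_of_ne_of_ne h1 h2,
            if_neg h1, if_neg h2, if_neg h3, if_neg h4]

lemma t_mem {n : ℕ} (hn : 1 ≤ n) : t ∈ W n := by
  have hn' : (1:ℤ) ≤ (n:ℤ) := by exact_mod_cast hn
  constructor
  · intro i; rw [t_apply, t_apply]; split_ifs <;> first | contradiction | omega
  · intro i hi
    rw [lt_abs] at hi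
    rw [t_apply]; split_ifs <;> first | contradiction | omega

lemma s_mem {i n : ℕ} (h1 : 1 ≤ i) (h2 : i < n) : s i ∈ W n := by
  have h1' : (1:ℤ) ≤ (i:ℤ) := by exact_mod_cast h1
  have h2' : (i:ℤ) < (n:ℤ) := by exact_mod_cast h2
  constructor
  · intro x; rw [s_apply h1, s_apply h1]; split_ifs <;> first | contradiction | omega
  · intro x hx
    rw [lt_abs] at hx
    rw [s_apply h1]; split_ifs <;> first | contradiction | omega

lemma w_zero {n : ℕ} {w : Equiv.Perm ℤ} (hw : w ∈ W n) : w 0 = 0 := by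
  have := hw.1 0
  simp only [neg_zero] at this
  omega

lemma w_abs {n : ℕ} {w : Equiv.Perm ℤ} (hw : w ∈ W n) {x : ℤ} (hx : |x| ≤ (n:ℤ)) :
    |w x| ≤ (n:ℤ) := by
  by_contra h
  have habs : (n:ℤ) < |w x| := not_le.mp h
  have h2 := (inv_mem hw : w⁻¹ ∈ W n).2 (w x) habs
  rw [(show w⁻¹ (w x) = x from Equiv.symm_apply_apply w x)] at h2
  rw [← h2] at habs
  rw [abs_le] at hx
  rw [lt_abs] at habs
  omega

lemma r_apply : ∀ (k : ℕ), 1 ≤ k → ∀ (x : ℤ),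
    r k x = if x = 1 then -(k:ℤ) else if 2 ≤ x ∧ x ≤ (k:ℤ) then x - 1
      else if x = -1 then (k:ℤ) else if -(k:ℤ) ≤ x ∧ x ≤ -2 then x + 1 else x
  | 0, h => by omega
  | 1, _ => by
      intro x
      show t x = _
      rw [t_apply]
      split_ifs <;> first | contradiction | omega
  | (k + 2), _ => by
      intro x
      have hk' : (1:ℤ) ≤ (k:ℤ)+1 := by omega
      show (s (k+1) * r (k+1)) x = _
      rw [Equiv.Perm.mul_apply, r_apply (k+1) (by omega), s_apply (by omega : 1 ≤ k+1)]
      push_cast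
      split_ifs <;> first | contradiction | omega

lemma r_mem {n : ℕ} : ∀ {k : ℕ}, k ≤ n → r k ∈ W n
  | 0, _ => one_mem _
  | 1, h => t_mem h
  | (k + 2), h => by
      show s (k+1) * r (k+1) ∈ W n
      exact mul_mem (s_mem (by omega) (by omega)) (r_mem (by omega))

lemma a_apply : ∀ (m : ℕ) (x : ℤ),
    a m x = if 1 ≤ x ∧ x ≤ (m:ℤ) then x - ((m:ℤ)+1)
      else if -(m:ℤ) ≤ x ∧ x ≤ -1 then x + ((m:ℤ)+1) else x
  | 0, x => by
      show x = _
      split_ifs <;> first | contradiction | omega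
  | (m+1), x => by
      show (a m * r (m+1)) x = _
      rw [Equiv.Perm.mul_apply, r_apply (m+1) (by omega), a_apply m]
      push_cast
      split_ifs <;> first | contradiction | omega

lemma a_mem {n : ℕ} : ∀ {m : ℕ}, m ≤ n → a m ∈ W n
  | 0, _ => one_mem _
  | (m+1), h => mul_mem (a_mem (by omega)) (r_mem h)

def Q (n m : ℕ) : Subgroup (Equiv.Perm ℤ) where
  carrier := {w | w ∈ W n ∧ (∀ x : ℤ, 1 ≤ x → x ≤ (m:ℤ) → 1 ≤ w x ∧ w x ≤ (m:ℤ)) ∧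
    (∀ x : ℤ, (m:ℤ)+1 ≤ x → x ≤ (n:ℤ) → (m:ℤ)+1 ≤ w x ∧ w x ≤ (n:ℤ))}
  one_mem' := ⟨one_mem _, fun x h1 h2 => ⟨h1, h2⟩, fun x h1 h2 => ⟨h1, h2⟩⟩
  mul_mem' := by
    rintro u v ⟨hu, hu1, hu2⟩ ⟨hv, hv1, hv2⟩
    refine ⟨mul_mem hu hv, fun x h1 h2 => ?_, fun x h1 h2 => ?_⟩
    · rw [Equiv.Perm.mul_apply]
      exact hu1 _ (hv1 x h1 h2).1 (hv1 x h1 h2).2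
    · rw [Equiv.Perm.mul_apply]
      exact hu2 _ (hv2 x h1 h2).1 (hv2 x h1 h2).2
  inv_mem' := by
    rintro u ⟨hu, hu1, hu2⟩
    have hneg : ∀ y : ℤ, y < 0 → u y ≤ -1 ∨ u y = y := by
      intro y hy
      by_cases hn : -y ≤ (n:ℤ)
      · left
        have h3 := hu.1 (-y)
        rw [neg_neg] at h3
        have : 1 ≤ u (-y) := by
          by_cases hm : -y ≤ (m:ℤ)
          · exact (hu1 (-y) (by omega) hm).1
          · have := (hu2 (-y) (by omega) hn).1; omega
        omega
      · right; exact hu.2 y (by rw [lt_abs]; omega)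
    refine ⟨inv_mem hu, fun x h1 h2 => ?_, fun x h1 h2 => ?_⟩
    all_goals {
      set y := u⁻¹ x with hy
      have hyx : u y = x := Equiv.apply_symm_apply u x
      rcases lt_trichotomy y 0 with h | h | h
      · exfalso; rcases hneg y h with h' | h' <;> omega
      · exfalso; rw [h, w_zero hu] at hyx; omega
      · constructor
        · by_contra hc
          push_neg at hc
          by_cases hn : y ≤ (n:ℤ)
          · first
            | (have := (hu2 y (by omega) hn).1; omega)
            | (have := (hu1 y (by omega) (by omega)).2; omega)
          · have := hu.2 y (by rw [lt_abs]; omega); omega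
        · by_contra hc
          push_neg at hc
          by_cases hn : y ≤ (n:ℤ)
          · first
            | (have := (hu2 y (by omega) hn).1; omega)
            | (have := (hu1 y (by omega) (by omega)).2; omega)
          · have := hu.2 y (by rw [lt_abs]; omega); omega
    }

lemma sym_le_Q (n : ℕ) : Sym n ≤ Q n n := by
  rw [Sym, Subgroup.closure_le]
  rintro x ⟨i, h1, h2, rfl⟩
  have h1' : (1:ℤ) ≤ (i:ℤ) := by exact_mod_cast h1
  have h2' : (i:ℤ) < (n:ℤ) := by exact_mod_cast h2
  refine ⟨s_mem h1 h2, fun x hx1 hx2 => ?_, fun x hx1 hx2 => by omega⟩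
  rw [s_apply h1]
  split_ifs <;> omega

lemma symP_le_Q (n m : ℕ) : SymP n m ≤ Q n m := by
  rw [SymP, Subgroup.closure_le]
  rintro x ⟨i, h1, h2, hm, rfl⟩
  have h1' : (1:ℤ) ≤ (i:ℤ) := by exact_mod_cast h1
  have h2' : (i:ℤ) < (n:ℤ) := by exact_mod_cast h2
  have hm' : (i:ℤ) ≠ (m:ℤ) := by exact_mod_cast hm
  refine ⟨s_mem h1 h2, fun x hx1 hx2 => ?_, fun x hx1 hx2 => ?_⟩ <;>
    · rw [s_apply h1]; split_ifs <;> omega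

lemma sym_mem_W {n : ℕ} {w : Equiv.Perm ℤ} (h : w ∈ Sym n) : w ∈ W n := (sym_le_Q n h).1

lemma sym_pos {n : ℕ} {w : Equiv.Perm ℤ} (h : w ∈ Sym n) :
    ∀ x : ℤ, 1 ≤ x → x ≤ (n:ℤ) → 1 ≤ w x ∧ w x ≤ (n:ℤ) := (sym_le_Q n h).2.1

lemma prodR_zero (i : Fin 0 → ℕ) : prodR i = 1 := by
  simp [prodR]

lemma prodR_succ {l : ℕ} (i : Fin (l+1) → ℕ) :
    prodR i = r (i 0) * prodR (fun k : Fin l => i k.succ) := by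
  simp [prodR, List.ofFn_succ]

lemma prodR_mem {n : ℕ} : ∀ (l : ℕ) (i : Fin l → ℕ), (∀ k, i k ≤ n) → prodR i ∈ W n
  | 0, i, _ => by rw [prodR_zero]; exact one_mem _
  | (l+1), i, h => by
      rw [prodR_succ]
      exact mul_mem (r_mem (h 0)) (prodR_mem l _ (fun k => h k.succ))

lemma prodR_spec : ∀ (l : ℕ) (i : Fin l → ℕ), StrictMono i → (∀ k, 1 ≤ i k) →
    ((∀ k : Fin l, prodR i ((l:ℤ) - ((k:ℕ):ℤ)) = -((i k : ℕ):ℤ)) ∧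
     (∀ x y : ℤ, (l:ℤ)+1 ≤ x → x < y → prodR i x < prodR i y) ∧
     (∀ x : ℤ, (l:ℤ)+1 ≤ x → x - (l:ℤ) ≤ prodR i x ∧ prodR i x ≤ x) ∧
     (∀ c : ℕ, (∀ k, c+1 ≤ i k) → ∀ x : ℤ, (l:ℤ)+1 ≤ x → x ≤ (l:ℤ) + (c:ℤ) →
        prodR i x = x - (l:ℤ)))
  | 0, i, _, _ => by
      rw [prodR_zero]
      refine ⟨fun k => k.elim0, fun x y _ h => ?_, fun x _ => ?_, fun c _ x h1 h2 => ?_⟩ <;>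
        simp only [Equiv.Perm.one_apply, Nat.cast_zero] <;> omega
  | (l+1), i, hmono, h1 => by
      have hmono' : StrictMono (fun k : Fin l => i k.succ) := fun a b hab => hmono (by
        simpa using Fin.succ_lt_succ_iff.mpr hab)
      have h1' : ∀ k : Fin l, 1 ≤ i k.succ := fun k => h1 k.succ
      have hgt : ∀ k : Fin l, i 0 + 1 ≤ i k.succ := by
        intro k
        have := hmono (Fin.succ_pos k)
        omega
      obtain ⟨hb', hm', hbd', hd'⟩ := prodR_spec l (fun k : Fin l => i k.succ) hmono' h1'
      set v' := prodR (fun k : Fin l => i k.succ) with hv'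
      have hrw : ∀ x : ℤ, prodR i x = r (i 0) (v' x) := by
        intro x
        rw [prodR_succ, Equiv.Perm.mul_apply]
      have hi0 : (1:ℤ) ≤ ((i 0 : ℕ):ℤ) := by exact_mod_cast h1 0
      have r0 := r_apply (i 0) (h1 0)
      refine ⟨?_, ?_, ?_, ?_⟩
      · intro k
        refine Fin.cases ?_ ?_ k
        · have hv1 : v' ((l:ℤ)+1) = 1 := by
            have h := hd' 1 (fun k => by have := hgt k; have := h1 0; omega) ((l:ℤ)+1) (by omega) (by push_cast; omega)
            omega
          have hpos0 : ((l+1:ℕ):ℤ) - (((0 : Fin (l+1)):ℕ):ℤ) = (l:ℤ)+1 := by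
            simp
          rw [hpos0, hrw, hv1, r0]
          norm_num
        · intro k'
          have hks : ((i 0:ℕ):ℤ) + 1 ≤ ((i k'.succ:ℕ):ℤ) := by exact_mod_cast hgt k'
          have hpos : ((l+1:ℕ):ℤ) - (((k'.succ : Fin (l+1)) : ℕ):ℤ) = (l:ℤ) - ((k' : ℕ):ℤ) := by
            push_cast [Fin.val_succ]
            ring
          rw [hpos, hrw, hb' k', r0]
          split_ifs <;> first | contradiction | omega
      · intro x y hx hxy
        push_cast at hx
        obtain ⟨ha1, ha2⟩ := hbd' x (by omega)
        obtain ⟨hb1, hb2⟩ := hbd' y (by omega)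
        have hvm := hm' x y (by omega) hxy
        rw [hrw, hrw, r0, r0]
        split_ifs <;> first | contradiction | omega
      · intro x hx
        push_cast at hx ⊢
        obtain ⟨ha1, ha2⟩ := hbd' x (by omega)
        rw [hrw, r0]
        split_ifs <;> first | contradiction | omega
      · intro c hc x hx1 hx2
        have hc0' : ((c:ℕ):ℤ) + 1 ≤ ((i 0 : ℕ):ℤ) := by exact_mod_cast hc 0
        have hcv : ∀ k : Fin l, (c+1)+1 ≤ i k.succ := by
          intro k
          have ha := hgt k
          have hb := hc 0
          omega
        push_cast at hx1 hx2 ⊢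
        have hv'x : v' x = x - (l:ℤ) := hd' (c+1) hcv x (by omega) (by push_cast; omega)
        rw [hrw, hv'x, r0]
        split_ifs <;> first | contradiction | omega

noncomputable def invF (n : ℕ) (w : Equiv.Perm ℤ) : Finset (ℤ × ℤ) :=
  (Finset.Icc (1:ℤ) (n:ℤ) ×ˢ Finset.Icc (1:ℤ) (n:ℤ)).filter fun q => q.1 < q.2 ∧ w q.2 < w q.1

noncomputable def L (n : ℕ) (w : Equiv.Perm ℤ) : ℕ :=
  (invF n w).card + ∑ x ∈ Finset.Icc (1:ℤ) (n:ℤ), (if w x < 0 then (-(w x)).toNat else 0)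

lemma t_sq : t * t = 1 := by rw [t]; exact Equiv.swap_mul_self _ _

lemma s_sq {i : ℕ} (h : 1 ≤ i) : s i * s i = 1 := by
  ext x
  rw [Equiv.Perm.mul_apply, s_apply h, s_apply h, Equiv.Perm.one_apply]
  have h' : (1:ℤ) ≤ (i:ℤ) := by exact_mod_cast h
  split_ifs <;> first | contradiction | omega

lemma sp_sp {p : ℕ} (h : 1 ≤ p) (x : ℤ) : s p (s p x) = x := by
  rw [← Equiv.Perm.mul_apply, s_sq h, Equiv.Perm.one_apply]

lemma mem_invF {n : ℕ} {w : Equiv.Perm ℤ} {q : ℤ × ℤ} :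
    q ∈ invF n w ↔ (1 ≤ q.1 ∧ q.1 ≤ (n:ℤ)) ∧ (1 ≤ q.2 ∧ q.2 ≤ (n:ℤ)) ∧
      q.1 < q.2 ∧ w q.2 < w q.1 := by
  simp only [invF, Finset.mem_filter, Finset.mem_product, Finset.mem_Icc]
  tauto

lemma L_mul_s {n p : ℕ} {w : Equiv.Perm ℤ} (hp : 1 ≤ p) (hpn : p < n)
    (h : w (p:ℤ) < w ((p:ℤ)+1)) : L n (w * s p) = L n w + 1 := by
  have hp' : (1:ℤ) ≤ (p:ℤ) := by exact_mod_cast hp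
  have hpn' : (p:ℤ) < (n:ℤ) := by exact_mod_cast hpn
  have sp := s_apply hp
  have hspIcc : ∀ x : ℤ, 1 ≤ x → x ≤ (n:ℤ) → 1 ≤ s p x ∧ s p x ≤ (n:ℤ) := by
    intro x h1 h2
    rw [sp]
    split_ifs <;> omega
  have hsum : (∑ x ∈ Finset.Icc (1:ℤ) (n:ℤ), (if (w * s p) x < 0 then (-((w * s p) x)).toNat else 0))
      = ∑ x ∈ Finset.Icc (1:ℤ) (n:ℤ), (if w x < 0 then (-(w x)).toNat else 0) := by
    refine Finset.sum_equiv (s p : Equiv.Perm ℤ) ?_ ?_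
    · intro x
      simp only [Finset.mem_Icc]
      constructor
      · intro hx; exact ⟨(hspIcc x hx.1 hx.2).1, (hspIcc x hx.1 hx.2).2⟩
      · intro hx
        have h2 := hspIcc _ hx.1 hx.2
        rw [sp_sp hp] at h2
        exact h2
    · intro x _
      rfl
  have hpair : ((p:ℤ), (p:ℤ)+1) ∈ invF n (w * s p) := by
    rw [mem_invF]
    refine ⟨⟨by omega, by omega⟩, ⟨by omega, by omega⟩, by omega, ?_⟩
    have e1 : s p ((p:ℤ)) = (p:ℤ)+1 := by rw [sp]; split_ifs <;> omega
    have e2 : s p ((p:ℤ)+1) = (p:ℤ) := by rw [sp]; split_ifs <;> omega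
    simp only [Equiv.Perm.mul_apply, e1, e2]
    exact h
  have horder : ∀ q : ℤ × ℤ, 1 ≤ q.1 → q.1 < q.2 → q ≠ ((p:ℤ), (p:ℤ)+1) →
      s p q.1 < s p q.2 := by
    intro q h1 h2 hne
    have : ¬(q.1 = (p:ℤ) ∧ q.2 = (p:ℤ)+1) := by
      intro hh; exact hne (Prod.ext hh.1 hh.2)
    rw [sp, sp]
    split_ifs <;> omega
  have hcard : (invF n (w * s p)).card = (invF n w).card + 1 := by
    rw [← Finset.card_erase_add_one hpair]
    congr 1
    refine Finset.card_bij' (fun q _ => (s p q.1, s p q.2)) (fun q _ => (s p q.1, s p q.2))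
      ?_ ?_ ?_ ?_
    · intro q hq
      rw [Finset.mem_erase, mem_invF] at hq
      obtain ⟨hne, ⟨hb1, hb2, hlt, hv⟩⟩ := hq
      rw [mem_invF]
      refine ⟨hspIcc _ hb1.1 hb1.2, hspIcc _ hb2.1 hb2.2, horder q hb1.1 hlt hne, ?_⟩
      simpa only [Equiv.Perm.mul_apply] using hv
    · intro q hq
      rw [mem_invF] at hq
      obtain ⟨hb1, hb2, hlt, hv⟩ := hq
      rw [Finset.mem_erase, mem_invF]
      have hne : (s p q.1, s p q.2) ≠ ((p:ℤ), (p:ℤ)+1) := by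
        intro hh
        rw [Prod.mk.injEq] at hh
        have e1 : q.1 = s p (p:ℤ) := by rw [← hh.1, sp_sp hp]
        have e2 : q.2 = s p ((p:ℤ)+1) := by rw [← hh.2, sp_sp hp]
        have f1 : s p ((p:ℤ)) = (p:ℤ)+1 := by rw [sp]; split_ifs <;> omega
        have f2 : s p ((p:ℤ)+1) = (p:ℤ) := by rw [sp]; split_ifs <;> omega
        rw [f1] at e1; rw [f2] at e2
        omega
      have horder2 : s p q.1 < s p q.2 := horder q hb1.1 hlt (by
        intro hh
        have hv2 : w ((p:ℤ)+1) < w (p:ℤ) := by rw [hh] at hv; exact hv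
        omega)
      refine ⟨hne, hspIcc _ hb1.1 hb1.2, hspIcc _ hb2.1 hb2.2, horder2, ?_⟩
      simp only [Equiv.Perm.mul_apply, sp_sp hp]
      exact hv
    · intro q _; simp [sp_sp hp]
    · intro q _; simp [sp_sp hp]
  unfold L
  rw [hsum, hcard]
  omega

lemma L_mul_s' {n p : ℕ} {w : Equiv.Perm ℤ} (hp : 1 ≤ p) (hpn : p < n)
    (h : w ((p:ℤ)+1) < w (p:ℤ)) : L n w = L n (w * s p) + 1 := by
  have f1 : s p ((p:ℤ)) = (p:ℤ)+1 := by
    rw [s_apply hp]; have : (1:ℤ) ≤ (p:ℤ) := by exact_mod_cast hp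
    split_ifs <;> omega
  have f2 : s p ((p:ℤ)+1) = (p:ℤ) := by
    rw [s_apply hp]; have : (1:ℤ) ≤ (p:ℤ) := by exact_mod_cast hp
    split_ifs <;> omega
  have h2 : (w * s p) (p:ℤ) < (w * s p) ((p:ℤ)+1) := by
    simp only [Equiv.Perm.mul_apply, f1, f2]
    exact h
  have := L_mul_s hp hpn h2
  rw [mul_assoc, s_sq hp, mul_one] at this
  omega

lemma w_eq_of_agree {n : ℕ} {u v : Equiv.Perm ℤ} (hu : u ∈ W n) (hv : v ∈ W n)
    (h : ∀ x : ℤ, 1 ≤ x → x ≤ (n:ℤ) → u x = v x) : u = v := by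
  ext x
  rcases lt_trichotomy x 0 with hx | hx | hx
  · by_cases hn : -x ≤ (n:ℤ)
    · have h1 := hu.1 (-x)
      have h2 := hv.1 (-x)
      rw [neg_neg] at h1 h2
      rw [h1, h2, h (-x) (by omega) hn]
    · rw [hu.2 x (by rw [lt_abs]; omega), hv.2 x (by rw [lt_abs]; omega)]
  · rw [hx, w_zero hu, w_zero hv]
  · by_cases hn : x ≤ (n:ℤ)
    · exact h x (by omega) hn
    · rw [hu.2 x (by rw [lt_abs]; omega), hv.2 x (by rw [lt_abs]; omega)]

lemma mono_of_adj {f : ℤ → ℤ} {a b : ℤ} (h : ∀ p : ℤ, a ≤ p → p + 1 ≤ b → f p < f (p + 1)) :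
    ∀ x y : ℤ, a ≤ x → x < y → y ≤ b → f x < f y := by
  intro x y hx hxy hyb
  have key : ∀ z : ℤ, x + 1 ≤ z → z ≤ b → f x < f z := by
    refine Int.le_induction ?_ ?_
    · intro hb; exact h x hx hb
    · intro z hz IH hb
      have h1 : f x < f z := IH (by omega)
      have h2 : f z < f (z+1) := h z (by omega) hb
      omega
  exact key y (by omega) hyb

lemma L_mul_t {n : ℕ} {w : Equiv.Perm ℤ} (hn : 1 ≤ n) (hw : w ∈ W n)
    (h : 0 < w 1) : L n (w * t) = L n w + 1 := by
  have hn' : (1:ℤ) ≤ (n:ℤ) := by exact_mod_cast hn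
  set c := w 1 with hc
  have hcn : c ≤ (n:ℤ) := by
    have := w_abs hw (x := 1) (by rw [abs_le]; omega)
    rw [abs_le] at this
    omega
  have hwneg1 : w (-1) = -c := by
    have := hw.1 1
    omega
  have ht2 : ∀ x : ℤ, x ≠ 1 → x ≠ -1 → t x = x := by
    intro x h1 h2
    rw [t_apply]
    split_ifs <;> first | contradiction | rfl
  have ht1 : t 1 = -1 := by rw [t_apply]; split_ifs <;> omega
  have habs_count : ((Finset.Icc (1:ℤ) (n:ℤ)).filter fun y => 1 < y ∧ -c ≤ w y ∧ w y < c).card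
      = (c - 1).toNat := by
    have hicc : (c - 1).toNat = (Finset.Icc (1:ℤ) (c-1)).card := by
      rw [Int.card_Icc]
      congr 1
      omega
    rw [hicc]
    refine Finset.card_nbij (fun y => |w y|) ?_ ?_ ?_
    · intro y hy
      show |w y| ∈ Finset.Icc (1:ℤ) (c-1)
      rw [Finset.mem_coe, Finset.mem_filter, Finset.mem_Icc] at hy
      obtain ⟨⟨hy1, hy2⟩, hy3, hy4, hy5⟩ := hy
      have hne0 : w y ≠ 0 := by
        intro h0
        have h0' : w y = w 0 := by rw [h0, w_zero hw]
        have := w.injective h0'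
        omega
      have hnemd : w y ≠ -c := by
        intro h0
        have h0' : w y = w (-1) := by rw [h0, hwneg1]
        have := w.injective h0'
        omega
      rw [Finset.mem_Icc]
      rcases abs_cases (w y) with ⟨he, _⟩ | ⟨he, _⟩ <;> omega
    · intro y1 hy1 y2 hy2 heq
      simp only [Finset.coe_filter, Set.mem_setOf_eq, Finset.mem_Icc] at hy1 hy2
      have heq' : |w y1| = |w y2| := heq
      rcases abs_cases (w y1) with ⟨he1, _⟩ | ⟨he1, _⟩ <;>
        rcases abs_cases (w y2) with ⟨he2, _⟩ | ⟨he2, _⟩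
      · exact w.injective (by omega)
      · have h0' : w y1 = w (-y2) := by rw [hw.1 y2]; omega
        have := w.injective h0'
        omega
      · have h0' : w y1 = w (-y2) := by rw [hw.1 y2]; omega
        have := w.injective h0'
        omega
      · exact w.injective (by omega)
    · intro v hv
      simp only [Finset.coe_Icc, Set.mem_Icc] at hv
      set z := w⁻¹ v with hz
      have hzv : w z = v := Equiv.apply_symm_apply w v
      have hz0 : z ≠ 0 := by
        intro h0
        rw [h0, w_zero hw] at hzv
        omega
      have hzn : -(n:ℤ) ≤ z ∧ z ≤ (n:ℤ) := by
        by_contra hcon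
        have hgt : (n:ℤ) < |z| := by rw [lt_abs]; omega
        have := hw.2 z hgt
        rw [this] at hzv
        rw [lt_abs] at hgt
        omega
      have hz1 : z ≠ 1 := by
        intro h0; rw [h0] at hzv; omega
      have hzm1 : z ≠ -1 := by
        intro h0; rw [h0, hwneg1] at hzv; omega
      refine ⟨|z|, ?_, ?_⟩
      · simp only [Finset.coe_filter, Set.mem_setOf_eq, Finset.mem_Icc]
        rcases abs_cases z with ⟨he, hp⟩ | ⟨he, hp⟩
        · rw [he]
          refine ⟨⟨by omega, by omega⟩, by omega, by rw [hzv]; omega, by rw [hzv]; omega⟩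
        · rw [he]
          have hwz : w (-z) = -v := by rw [hw.1 z, hzv]
          refine ⟨⟨by omega, by omega⟩, by omega, by rw [hwz]; omega, by rw [hwz]; omega⟩
      · show abs (w (abs z)) = v
        rcases abs_cases z with ⟨he, hp⟩ | ⟨he, hp⟩
        · rw [he, hzv]
          exact abs_of_nonneg (by omega)
        · rw [he]
          have hwz : w (-z) = -v := by rw [hw.1 z, hzv]
          rw [hwz, abs_neg]
          exact abs_of_nonneg (by omega)
  -- sum part
  have h1mem : (1:ℤ) ∈ Finset.Icc (1:ℤ) (n:ℤ) := by rw [Finset.mem_Icc]; omega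
  have hsum : (∑ x ∈ Finset.Icc (1:ℤ) (n:ℤ), (if (w * t) x < 0 then (-((w * t) x)).toNat else 0))
      = (∑ x ∈ Finset.Icc (1:ℤ) (n:ℤ), (if w x < 0 then (-(w x)).toNat else 0)) + c.toNat := by
    rw [← Finset.add_sum_erase _ _ h1mem, ← Finset.add_sum_erase _ (fun x => if w x < 0 then (-(w x)).toNat else 0) h1mem]
    have hrest : ∑ x ∈ (Finset.Icc (1:ℤ) (n:ℤ)).erase 1,
        (if (w * t) x < 0 then (-((w * t) x)).toNat else 0)
        = ∑ x ∈ (Finset.Icc (1:ℤ) (n:ℤ)).erase 1, (if w x < 0 then (-(w x)).toNat else 0) := by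
      refine Finset.sum_congr rfl ?_
      intro x hx
      rw [Finset.mem_erase, Finset.mem_Icc] at hx
      have : t x = x := ht2 x hx.1 (by omega)
      simp only [Equiv.Perm.mul_apply, this]
    rw [hrest]
    have hval : (w * t) 1 = -c := by
      simp only [Equiv.Perm.mul_apply, ht1, hwneg1]
    rw [hval]
    have e1 : (if -c < 0 then (-(-c)).toNat else 0) = c.toNat := by
      rw [if_pos (by omega)]; congr 1; omega
    have e2 : (if c < 0 then (-c).toNat else 0) = 0 := by rw [if_neg (by omega)]
    rw [e1, e2]
    omega
  -- inversion part
  have hcard : (invF n (w * t)).card + c.toNat = (invF n w).card + 1 := by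
    have hsplit : ∀ u : Equiv.Perm ℤ,
        ((invF n u).filter fun q => q.1 = 1).card
          + ((invF n u).filter fun q => ¬ q.1 = 1).card = (invF n u).card :=
      fun u => Finset.card_filter_add_card_filter_not _
    have hne : ((invF n (w * t)).filter fun q => ¬ q.1 = 1)
        = ((invF n w).filter fun q => ¬ q.1 = 1) := by
      ext q
      rw [Finset.mem_filter, Finset.mem_filter, mem_invF, mem_invF]
      constructor
      · rintro ⟨⟨hb1, hb2, hlt, hv⟩, hq1⟩
        have e1 : t q.1 = q.1 := ht2 _ hq1 (by omega)
        have e2 : t q.2 = q.2 := ht2 _ (by omega) (by omega)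
        simp only [Equiv.Perm.mul_apply, e1, e2] at hv
        exact ⟨⟨hb1, hb2, hlt, hv⟩, hq1⟩
      · rintro ⟨⟨hb1, hb2, hlt, hv⟩, hq1⟩
        have e1 : t q.1 = q.1 := ht2 _ hq1 (by omega)
        have e2 : t q.2 = q.2 := ht2 _ (by omega) (by omega)
        refine ⟨⟨hb1, hb2, hlt, ?_⟩, hq1⟩
        simp only [Equiv.Perm.mul_apply, e1, e2]
        exact hv
    have hcol : ∀ u : Equiv.Perm ℤ, ((invF n u).filter fun q => q.1 = 1).card
        = ((Finset.Icc (1:ℤ) (n:ℤ)).filter fun y => 1 < y ∧ u y < u 1).card := by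
      intro u
      refine Finset.card_bij (fun q _ => q.2) ?_ ?_ ?_
      · intro q hq
        rw [Finset.mem_filter, mem_invF] at hq
        obtain ⟨⟨hb1, hb2, hlt, hv⟩, hq1⟩ := hq
        rw [Finset.mem_filter, Finset.mem_Icc]
        rw [hq1] at hlt hv
        exact ⟨⟨hb2.1, hb2.2⟩, hlt, hv⟩
      · intro q1 hq1 q2 hq2 heq
        rw [Finset.mem_filter] at hq1 hq2
        have := hq1.2; have := hq2.2
        ext
        · rw [hq1.2, hq2.2]
        · exact heq
      · intro y hy
        rw [Finset.mem_filter, Finset.mem_Icc] at hy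
        refine ⟨(1, y), ?_, rfl⟩
        rw [Finset.mem_filter, mem_invF]
        exact ⟨⟨⟨by omega, by omega⟩, ⟨hy.1.1, hy.1.2⟩, hy.2.1, hy.2.2⟩, rfl⟩
    have hcol_wt : ((Finset.Icc (1:ℤ) (n:ℤ)).filter fun y => 1 < y ∧ (w * t) y < (w * t) 1)
        = ((Finset.Icc (1:ℤ) (n:ℤ)).filter fun y => 1 < y ∧ w y < -c) := by
      refine Finset.filter_congr ?_
      intro y hy
      rw [Finset.mem_Icc] at hy
      have hval : (w * t) 1 = -c := by simp only [Equiv.Perm.mul_apply, ht1, hwneg1]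
      constructor
      · rintro ⟨h1, h2⟩
        have e2 : t y = y := ht2 _ (by omega) (by omega)
        simp only [Equiv.Perm.mul_apply, e2, hval] at h2
        exact ⟨h1, h2⟩
      · rintro ⟨h1, h2⟩
        have e2 : t y = y := ht2 _ (by omega) (by omega)
        refine ⟨h1, ?_⟩
        simp only [Equiv.Perm.mul_apply, e2, hval]
        exact h2
    have hN1split : ((Finset.Icc (1:ℤ) (n:ℤ)).filter fun y => 1 < y ∧ w y < c).card
        = ((Finset.Icc (1:ℤ) (n:ℤ)).filter fun y => 1 < y ∧ w y < -c).card
          + ((Finset.Icc (1:ℤ) (n:ℤ)).filter fun y => 1 < y ∧ -c ≤ w y ∧ w y < c).card := by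
      have h0 := Finset.card_filter_add_card_filter_not
        (s := (Finset.Icc (1:ℤ) (n:ℤ)).filter fun y => 1 < y ∧ w y < c)
        (p := fun y => w y < -c)
      have eA : (((Finset.Icc (1:ℤ) (n:ℤ)).filter fun y => 1 < y ∧ w y < c).filter
          fun y => w y < -c) = ((Finset.Icc (1:ℤ) (n:ℤ)).filter fun y => 1 < y ∧ w y < -c) := by
        rw [Finset.filter_filter]
        refine Finset.filter_congr ?_
        intro y _
        constructor
        · rintro ⟨⟨h1, _⟩, h2⟩; exact ⟨h1, h2⟩
        · rintro ⟨h1, h2⟩; exact ⟨⟨h1, by omega⟩, h2⟩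
      have eB : (((Finset.Icc (1:ℤ) (n:ℤ)).filter fun y => 1 < y ∧ w y < c).filter
          fun y => ¬ w y < -c) = ((Finset.Icc (1:ℤ) (n:ℤ)).filter fun y => 1 < y ∧ -c ≤ w y ∧ w y < c) := by
        rw [Finset.filter_filter]
        refine Finset.filter_congr ?_
        intro y _
        constructor
        · rintro ⟨⟨h1, h2⟩, h3⟩; exact ⟨h1, by omega, h2⟩
        · rintro ⟨h1, h2, h3⟩; exact ⟨⟨h1, h3⟩, by omega⟩
      rw [eA, eB] at h0
      omega
    have habs := habs_count
    have h1' := hsplit (w * t)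
    have h2' := hsplit w
    rw [hne] at h1'
    rw [hcol (w * t), hcol_wt] at h1'
    rw [hcol w] at h2'
    rw [← hc] at h2'
    omega
  unfold L
  rw [hsum]
  omega

lemma L_mul_t' {n : ℕ} {w : Equiv.Perm ℤ} (hn : 1 ≤ n) (hw : w ∈ W n)
    (h : w 1 < 0) : L n w = L n (w * t) + 1 := by
  have hwt : w * t ∈ W n := mul_mem hw (t_mem hn)
  have ht1 : t 1 = -1 := by rw [t_apply]; split_ifs <;> omega
  have hval : (w * t) 1 = -(w 1) := by
    simp only [Equiv.Perm.mul_apply, ht1]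
    have := hw.1 1
    omega
  have := L_mul_t hn hwt (by omega)
  rw [mul_assoc, t_sq, mul_one] at this
  omega

lemma L_zero {n : ℕ} {w : Equiv.Perm ℤ} (hw : w ∈ W n) (h : L n w = 0) : w = 1 := by
  have hinv : (invF n w).card = 0 := by unfold L at h; omega
  have hsum : ∀ x ∈ Finset.Icc (1:ℤ) (n:ℤ), ¬ (w x < 0) := by
    intro x hx hneg
    have h0 : ∑ x ∈ Finset.Icc (1:ℤ) (n:ℤ), (if w x < 0 then (-(w x)).toNat else 0) = 0 := by
      unfold L at h; omega
    have := Finset.sum_eq_zero_iff.mp h0 x hx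
    rw [if_pos hneg] at this
    omega
  have hpos : ∀ x : ℤ, 1 ≤ x → x ≤ (n:ℤ) → 1 ≤ w x := by
    intro x h1 h2
    have hne := hsum x (by rw [Finset.mem_Icc]; omega)
    have h0 : w x ≠ 0 := by
      intro hh
      have : w x = w 0 := by rw [hh, w_zero hw]
      have := w.injective this
      omega
    omega
  have hinv' : ∀ x y : ℤ, 1 ≤ x → x < y → y ≤ (n:ℤ) → ¬ (w y < w x) := by
    intro x y h1 h2 h3 hlt
    have : (x, y) ∈ invF n w := by
      rw [mem_invF]
      exact ⟨⟨by omega, by omega⟩, ⟨by omega, h3⟩, h2, hlt⟩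
    rw [Finset.card_eq_zero] at hinv
    rw [hinv] at this
    exact absurd this (Finset.notMem_empty _)
  have hmono : ∀ p : ℤ, 1 ≤ p → p + 1 ≤ (n:ℤ) → w p < w (p+1) := by
    intro p h1 h2
    have hne : w p ≠ w (p+1) := fun hh => by have := w.injective hh; omega
    have := hinv' p (p+1) h1 (by omega) h2
    omega
  have hub : ∀ x : ℤ, 1 ≤ x → x ≤ (n:ℤ) → x ≤ w x := by
    refine Int.le_induction ?_ ?_
    · intro _; exact hpos 1 le_rfl (by assumption)
    · intro x hx IH h2
      have := hmono x hx h2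
      have := IH (by omega)
      omega
  have hlb : ∀ x : ℤ, x ≤ (n:ℤ) → 1 ≤ x → w x ≤ x := by
    refine Int.le_induction_down ?_ ?_
    · intro _
      have := w_abs hw (x := (n:ℤ)) (by rw [abs_le]; omega)
      rw [abs_le] at this
      omega
    · intro x hx IH h1
      by_cases hxn : x ≤ (n:ℤ)
      · have hm := hmono (x-1) (by omega) (by omega)
        have := IH (by omega)
        simp only [sub_add_cancel] at hm
        omega
      · omega
  refine w_eq_of_agree hw (one_mem _) ?_
  intro x h1 h2
  have := hub x h1 h2
  have := hlb x h2 h1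
  simp only [Equiv.Perm.one_apply]
  omega

lemma L_zero_of_incr {n : ℕ} {w : Equiv.Perm ℤ} (hw : w ∈ W n)
    (hadj : ∀ p : ℤ, 1 ≤ p → p + 1 ≤ (n:ℤ) → w p < w (p+1)) (h1 : 0 < w 1) :
    L n w = 0 := by
  have hmono := mono_of_adj (f := (w : ℤ → ℤ)) (a := 1) (b := (n:ℤ)) hadj
  have hpos : ∀ x : ℤ, 1 ≤ x → x ≤ (n:ℤ) → 0 < w x := by
    intro x hx1 hx2
    rcases eq_or_lt_of_le hx1 with hh | hh
    · rw [← hh]; exact h1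
    · have := hmono 1 x le_rfl hh hx2; omega
  have hinv : invF n w = ∅ := by
    rw [Finset.eq_empty_iff_forall_notMem]
    intro q hq
    rw [mem_invF] at hq
    obtain ⟨hb1, hb2, hlt, hv⟩ := hq
    have := hmono q.1 q.2 hb1.1 hlt hb2.2
    omega
  have hsum : ∀ x ∈ Finset.Icc (1:ℤ) (n:ℤ), (if w x < 0 then (-(w x)).toNat else 0) = 0 := by
    intro x hx
    rw [Finset.mem_Icc] at hx
    rw [if_neg (by have := hpos x hx.1 hx.2; omega)]
  unfold L
  rw [hinv, Finset.sum_eq_zero hsum]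
  simp

lemma gens_mem_W {n : ℕ} (hn : 1 ≤ n) {g : Equiv.Perm ℤ} (hg : g ∈ gens n) : g ∈ W n := by
  rcases hg with hg | ⟨i, h1, h2, rfl⟩
  · rw [Set.mem_singleton_iff] at hg; rw [hg]; exact t_mem hn
  · exact s_mem h1 h2

lemma prod_mem_W {n : ℕ} (hn : 1 ≤ n) :
    ∀ lw : List (Equiv.Perm ℤ), (∀ x ∈ lw, x ∈ gens n) → lw.prod ∈ W n := by
  intro lw
  induction lw with
  | nil => intro _; rw [List.prod_nil]; exact one_mem _
  | cons g lw IH =>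
      intro hg
      rw [List.prod_cons]
      exact mul_mem (gens_mem_W hn (hg g (by simp))) (IH fun x hx => hg x (by simp [hx]))

lemma L_succ_le {n : ℕ} (hn : 1 ≤ n) {w g : Equiv.Perm ℤ} (hw : w ∈ W n) (hg : g ∈ gens n) :
    L n (w * g) ≤ L n w + 1 := by
  rcases hg with hg | ⟨i, h1, h2, rfl⟩
  · rw [Set.mem_singleton_iff] at hg
    subst hg
    rcases lt_trichotomy (w 1) 0 with h | h | h
    · have := L_mul_t' hn hw h; omega
    · exfalso
      have : w 1 = w 0 := by rw [h, w_zero hw]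
      have := w.injective this
      omega
    · have := L_mul_t hn hw h; omega
  · rcases lt_trichotomy (w (i:ℤ)) (w ((i:ℤ)+1)) with h | h | h
    · have := L_mul_s h1 h2 h; omega
    · exfalso
      have := w.injective h
      omega
    · have := L_mul_s' h1 h2 h; omega

lemma L_prod_le {n : ℕ} (hn : 1 ≤ n) :
    ∀ lw : List (Equiv.Perm ℤ), (∀ x ∈ lw, x ∈ gens n) → L n lw.prod ≤ lw.length := by
  intro lw
  induction lw using List.reverseRecOn with
  | nil =>
      intro _
      rw [List.prod_nil]
      have : L n (1 : Equiv.Perm ℤ) = 0 := by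
        have : (1 : Equiv.Perm ℤ) = 1 := rfl
        exact le_antisymm (by
          have := L_zero_of_incr (n := n) (w := 1) (one_mem _)
            (fun p h1 h2 => by simp only [Equiv.Perm.one_apply]; omega)
            (by simp only [Equiv.Perm.one_apply]; omega)
          omega) (Nat.zero_le _)
      omega
  | append_singleton lw g IH =>
      intro hx
      rw [List.prod_append, List.prod_cons, List.prod_nil, mul_one]
      have h1 := L_succ_le hn (prod_mem_W hn lw (fun x hx' => hx x (by simp [hx'])))
        (hx g (by simp))
      have h2 := IH (fun x hx' => hx x (by simp [hx']))
      simp only [List.length_append, List.length_cons, List.length_nil]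
      omega

lemma exists_word {n : ℕ} (hn : 1 ≤ n) :
    ∀ (N : ℕ) (w : Equiv.Perm ℤ), w ∈ W n → L n w = N →
      ∃ lw : List (Equiv.Perm ℤ), (∀ x ∈ lw, x ∈ gens n) ∧ lw.prod = w ∧ lw.length = N := by
  intro N
  induction N using Nat.strong_induction_on with
  | _ N IH =>
    intro w hw hL
    rcases Nat.eq_zero_or_pos N with h0 | h0
    · subst h0
      have := L_zero hw hL
      exact ⟨[], by simp, by rw [List.prod_nil, this], rfl⟩
    · by_cases hex : ∃ p : ℕ, 1 ≤ p ∧ p < n ∧ w ((p:ℤ)+1) < w (p:ℤ)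
      · obtain ⟨p, hp1, hp2, hlt⟩ := hex
        have hred : L n w = L n (w * s p) + 1 := L_mul_s' hp1 hp2 hlt
        obtain ⟨lw, ha, hb, hc⟩ := IH (N - 1) (by omega) (w * s p)
          (mul_mem hw (s_mem hp1 hp2)) (by omega)
        refine ⟨lw ++ [s p], ?_, ?_, ?_⟩
        · intro x hxm
          rw [List.mem_append, List.mem_singleton] at hxm
          rcases hxm with hxm | rfl
          · exact ha x hxm
          · exact Or.inr ⟨p, hp1, hp2, rfl⟩
        · rw [List.prod_append, List.prod_cons, List.prod_nil, mul_one, hb,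
            mul_assoc, s_sq hp1, mul_one]
        · simp only [List.length_append, List.length_cons, List.length_nil]
          omega
      · push_neg at hex
        have hadj : ∀ p : ℤ, 1 ≤ p → p + 1 ≤ (n:ℤ) → w p < w (p+1) := by
          intro p h1 h2
          have hp : p = ((p.toNat : ℕ) : ℤ) := by omega
          have h1' : 1 ≤ p.toNat := by omega
          have h2' : p.toNat < n := by omega
          have := hex p.toNat h1' h2'
          rw [← hp] at this
          have hne : w p ≠ w (p+1) := fun hh => by have := w.injective hh; omega
          omega
        have h1 : w 1 < 0 := by
          rcases lt_trichotomy (w 1) 0 with h | h | h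
          · exact h
          · exfalso
            have : w 1 = w 0 := by rw [h, w_zero hw]
            have := w.injective this
            omega
          · exfalso
            have := L_zero_of_incr hw hadj h
            omega
        have hred : L n w = L n (w * t) + 1 := L_mul_t' hn hw h1
        obtain ⟨lw, ha, hb, hc⟩ := IH (N - 1) (by omega) (w * t)
          (mul_mem hw (t_mem hn)) (by omega)
        refine ⟨lw ++ [t], ?_, ?_, ?_⟩
        · intro x hxm
          rw [List.mem_append, List.mem_singleton] at hxm
          rcases hxm with hxm | rfl
          · exact ha x hxm
          · exact Or.inl rfl
        · rw [List.prod_append, List.prod_cons, List.prod_nil, mul_one, hb,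
            mul_assoc, t_sq, mul_one]
        · simp only [List.length_append, List.length_cons, List.length_nil]
          omega

lemma len_eq_L {n : ℕ} (hn : 1 ≤ n) {w : Equiv.Perm ℤ} (hw : w ∈ W n) : len n w = L n w := by
  obtain ⟨lw, ha, hb, hc⟩ := exists_word hn (L n w) w hw rfl
  have h1 : len n w ≤ L n w := Nat.sInf_le ⟨lw, ha, hb, hc⟩
  have hne : {k | ∃ l : List (Equiv.Perm ℤ), (∀ x ∈ l, x ∈ gens n) ∧ l.prod = w ∧ l.length = k}.Nonempty :=
    ⟨L n w, lw, ha, hb, hc⟩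
  obtain ⟨lw', ha', hb', hc'⟩ := Nat.sInf_mem hne
  have h2 : L n w ≤ len n w := by
    have hLle := L_prod_le hn lw' ha'
    rw [hb'] at hLle
    exact le_trans hLle (le_of_eq (show lw'.length = len n w from hc'))
  omega

lemma Y_adj {n m : ℕ} {α : Equiv.Perm ℤ} (hY : α ∈ Y n m) {p : ℕ}
    (hp : 1 ≤ p) (hpn : p < n) (hpm : p ≠ m) : α (p:ℤ) < α ((p:ℤ)+1) := by
  obtain ⟨hsym, hmin⟩ := hY
  have hn : 1 ≤ n := by omega
  have hαW : α ∈ W n := sym_mem_W hsym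
  rcases lt_trichotomy (α (p:ℤ)) (α ((p:ℤ)+1)) with h | h | h
  · exact h
  · exfalso; have := α.injective h; omega
  · exfalso
    have hs : s p ∈ SymP n m := Subgroup.subset_closure ⟨p, hp, hpn, hpm, rfl⟩
    have hmin' := hmin (s p) hs
    have hL : L n α = L n (α * s p) + 1 := L_mul_s' hp hpn h
    rw [len_eq_L hn hαW, len_eq_L hn (mul_mem hαW (s_mem hp hpn))] at hmin'
    omega

lemma wlong_apply (n : ℕ) (x : ℤ) :
    wlong n x = if -(n:ℤ) ≤ x ∧ x ≤ (n:ℤ) then -x else x := rfl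

lemma wlong_mem (n : ℕ) : wlong n ∈ W n := by
  constructor
  · intro x
    rw [wlong_apply, wlong_apply]
    split_ifs <;> omega
  · intro x hx
    rw [lt_abs] at hx
    rw [wlong_apply]
    split_ifs <;> omega

lemma fin_eq_of_range_subset {κ : ℕ} {f g : Fin κ → ℤ} (hf : StrictMono f)
    (hg : StrictMono g) (h : Set.range f ⊆ Set.range g) : f = g := by
  haveI : WellFoundedLT (Fin κ) := Finite.to_wellFoundedLT
  refine (StrictMono.range_inj hf hg).1 ?_
  refine Set.eq_of_subset_of_ncard_le h ?_ (Set.finite_range g)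
  have h1 : (Set.range f).ncard = κ := by
    rw [← Nat.card_coe_set_eq, Nat.card_range_of_injective hf.injective, Nat.card_eq_fintype_card,
      Fintype.card_fin]
  have h2 : (Set.range g).ncard = κ := by
    rw [← Nat.card_coe_set_eq, Nat.card_range_of_injective hg.injective, Nat.card_eq_fintype_card,
      Fintype.card_fin]
  omega

lemma image_upper {n : ℕ} {M : ℤ} (hM0 : 0 ≤ M) (hMn : M ≤ (n:ℤ)) {u : Equiv.Perm ℤ}
    (hu : u ∈ W n) (hlo : ∀ z : ℤ, 1 ≤ z → z ≤ M → u z < 0)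
    (hhi : ∀ z : ℤ, M + 1 ≤ z → z ≤ (n:ℤ) → 0 < u z) :
    u '' (Set.Icc (M+1) (n:ℤ)) = Set.Icc (1:ℤ) (n:ℤ) \ ((fun z => -(u z)) '' Set.Icc 1 M) := by
  ext v
  constructor
  · rintro ⟨z, hz, rfl⟩
    rw [Set.mem_Icc] at hz
    constructor
    · rw [Set.mem_Icc]
      refine ⟨hhi z hz.1 hz.2, ?_⟩
      have := w_abs hu (x := z) (by rw [abs_le]; omega)
      rw [abs_le] at this
      omega
    · rintro ⟨z', hz', hzz⟩
      rw [Set.mem_Icc] at hz'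
      simp only at hzz
      have h1 := hu.1 z'
      have : u z = u (-z') := by rw [h1]; omega
      have := u.injective this
      omega
  · rintro ⟨hv, hnotin⟩
    rw [Set.mem_Icc] at hv
    set z := u⁻¹ v with hz
    have hzv : u z = v := Equiv.apply_symm_apply u v
    have hz0 : z ≠ 0 := by
      intro h0
      rw [h0, w_zero hu] at hzv
      omega
    have hzn : -(n:ℤ) ≤ z ∧ z ≤ (n:ℤ) := by
      have := w_abs (inv_mem hu : u⁻¹ ∈ W n) (x := v) (by rw [abs_le]; omega)
      rw [abs_le] at this
      exact this
    rcases lt_trichotomy z 0 with h | h | h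
    · exfalso
      by_cases hm : -z ≤ M
      · refine hnotin ⟨-z, by rw [Set.mem_Icc]; omega, ?_⟩
        simp only
        have h1 := hu.1 z
        omega
      · have := hhi (-z) (by omega) (by omega)
        have h1 := hu.1 z
        omega
    · omega
    · refine ⟨z, ?_, hzv⟩
      rw [Set.mem_Icc]
      by_cases hm : z ≤ M
      · exfalso
        have := hlo z (by omega) hm
        omega
      · omega

end Aux

/-- if `α_w a_l = r_{i_1} ⋯ r_{i_l}` (canonical decomposition of `w`,
`l = ℓ_t(w)`) then `α_{w_n w} a_{n-l} = r_{j_1} ⋯ r_{j_{n-l}}` where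
`{j_1 < ⋯ < j_{n-l}}` is the complement of `{i_1 < ⋯ < i_l}` in `{1,…,n}`. -/
theorem stmt6 (n : ℕ) (w : Equiv.Perm ℤ) (hw : w ∈ W n)
    (l : ℕ) (α β σ : Equiv.Perm ℤ) (hdec : IsDecomp n w l α β σ) (hl : l = lent n w)
    (i : Fin l → ℕ) (hi : StrictMono i) (hi1 : ∀ k, 1 ≤ i k ∧ i k ≤ n)
    (hri : α * a l = prodR i)
    (j : Fin (n - l) → ℕ) (hj : StrictMono j) (hj1 : ∀ k, 1 ≤ j k ∧ j k ≤ n)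
    (hdisj : ∀ k k', i k ≠ j k')
    (hcover : ∀ m : ℕ, 1 ≤ m → m ≤ n → (∃ k, i k = m) ∨ (∃ k, j k = m))
    (α' β' σ' : Equiv.Perm ℤ)
    (hdec' : IsDecomp n (wlong n * w) (n - l) α' β' σ')
    (hl' : n - l = lent n (wlong n * w)) :
    α' * a (n - l) = prodR j := by
  obtain ⟨hln, hαY, hβY, hσP, heqw⟩ := hdec
  obtain ⟨hmn0, hα'Y, hβ'Y, hσ'P, heqw'⟩ := hdec'
  have hln' : (l:ℤ) ≤ (n:ℤ) := by exact_mod_cast hln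
  have hMn : ((n - l:ℕ):ℤ) ≤ (n:ℤ) := by
    have : n - l ≤ n := Nat.sub_le n l
    exact_mod_cast this
  obtain ⟨hbi, hmi, hbdi, -⟩ := prodR_spec l i hi (fun k => (hi1 k).1)
  obtain ⟨hbj, hmj, hbdj, -⟩ := prodR_spec (n - l) j hj (fun k => (hj1 k).1)
  have hviW : prodR i ∈ W n := prodR_mem l i (fun k => (hi1 k).2)
  have hvjW : prodR j ∈ W n := prodR_mem (n - l) j (fun k => (hj1 k).2)
  have hα'W : α' ∈ W n := sym_mem_W hα'Y.1
  have hσQ := symP_le_Q n l hσP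
  have hσ'invQ := symP_le_Q n (n - l) (inv_mem hσ'P)
  have hβ'pos := sym_pos hβ'Y.1
  have hβinvpos := sym_pos (inv_mem hβY.1 : β⁻¹ ∈ Sym n)
  have hα'pos := sym_pos hα'Y.1
  have hcomp : ∀ X : ℤ, α (a l X) = prodR i X := fun X => by
    rw [← hri]; rfl
  have hwval : ∀ y : ℤ, w y = prodR i (σ (β⁻¹ y)) := by
    intro y
    conv_lhs => rw [heqw]
    simp only [Equiv.Perm.mul_apply]
    rw [hcomp]
  -- Claim A : positive values of w on [1,n] avoid the i's
  have hClaimA : ∀ y : ℤ, 1 ≤ y → y ≤ (n:ℤ) → 0 < w y → ∀ k : Fin l, w y ≠ ((i k : ℕ):ℤ) := by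
    intro y h1 h2 hpos k hk
    have hx := hβinvpos y h1 h2
    set x := β⁻¹ y with hxdef
    have hwy : w y = prodR i (σ x) := hwval y
    by_cases hxl : x ≤ (l:ℤ)
    · have hσx := hσQ.2.1 x hx.1 hxl
      set k' : Fin l := ⟨l - (σ x).toNat, by omega⟩ with hk'
      have hk'val : ((k' : ℕ):ℤ) = (l:ℤ) - σ x := by
        have hv : (k' : ℕ) = l - (σ x).toNat := rfl
        omega
      have hval := hbi k'
      rw [show (l:ℤ) - ((k':ℕ):ℤ) = σ x by omega] at hval
      have := (hi1 k').1
      omega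
    · have hσx := hσQ.2.2 x (by omega) hx.2
      have hvpos := hbdi (σ x) (by omega)
      have hodd := hviW.1 ((l:ℤ) - ((k:ℕ):ℤ))
      rw [hbi k] at hodd
      have heqv : prodR i (σ x) = prodR i (-((l:ℤ) - ((k:ℕ):ℤ))) := by
        rw [hodd]; omega
      have hinj := (prodR i).injective heqv
      have hkl : ((k:ℕ):ℤ) < (l:ℤ) := by exact_mod_cast k.isLt
      omega
  -- wlong * w
  have hwnw : ∀ y : ℤ, -(n:ℤ) ≤ y → y ≤ (n:ℤ) → (wlong n * w) y = -(w y) := by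
    intro y hy1 hy2
    have := w_abs hw (x := y) (by rw [abs_le]; exact ⟨hy1, hy2⟩)
    rw [abs_le] at this
    simp only [Equiv.Perm.mul_apply]
    rw [wlong_apply, if_pos ⟨this.1, this.2⟩]
  have hval' : ∀ z : ℤ, (wlong n * w) (β' z) = α' (a (n - l) (σ' z)) := by
    intro z
    conv_lhs => rw [heqw']
    simp only [Equiv.Perm.mul_apply, (show β'⁻¹ (β' z) = z from Equiv.symm_apply_apply β' z)]
  -- star : the values of α' on the lower block are j's
  have hstar : ∀ z : ℤ, 1 ≤ z → z ≤ ((n - l:ℕ):ℤ) →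
      ∃ k : Fin (n - l), α' z = ((j k : ℕ):ℤ) := by
    intro z h1 h2
    have hq := hσ'invQ.2.1 (((n - l:ℕ):ℤ) + 1 - z) (by omega) (by omega)
    set x := σ'⁻¹ (((n - l:ℕ):ℤ) + 1 - z) with hxdef
    have hy := hβ'pos x hq.1 (le_trans hq.2 hMn)
    set y := β' x with hydef
    have hαz := hα'pos z h1 (by omega)
    have hcalc : (wlong n * w) y = -(α' z) := by
      rw [hydef, hval' x]
      have hσ'x : σ' x = ((n - l:ℕ):ℤ) + 1 - z := Equiv.apply_symm_apply σ' _
      rw [hσ'x, a_apply, if_pos ⟨by omega, by omega⟩]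
      rw [show ((n - l:ℕ):ℤ) + 1 - z - (((n - l:ℕ):ℤ) + 1) = -z by ring]
      exact hα'W.1 z
    have h4 := hwnw y (by omega) (by omega)
    have hwy : w y = α' z := by omega
    have hwyn := w_abs hw (x := y) (by rw [abs_le]; omega)
    rw [abs_le] at hwyn
    rcases hcover (w y).toNat (by omega) (by omega) with ⟨k, hk⟩ | ⟨k, hk⟩
    · exfalso
      exact hClaimA y (by omega) (by omega) (by omega) k (by omega)
    · exact ⟨k, by omega⟩
  -- monotonicity of α'
  have hadj : ∀ p : ℤ, 1 ≤ p → p + 1 ≤ (n:ℤ) → p ≠ ((n - l:ℕ):ℤ) → α' p < α' (p+1) := by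
    intro p h1 h2 h3
    have h4 := Y_adj hα'Y (p := p.toNat) (by omega) (by omega) (by omega)
    rw [show ((p.toNat : ℕ):ℤ) = p by omega] at h4
    exact h4
  have hmono_low : ∀ x y : ℤ, 1 ≤ x → x < y → y ≤ ((n - l:ℕ):ℤ) → α' x < α' y :=
    mono_of_adj (f := (α' : ℤ → ℤ)) (a := 1) (b := ((n - l:ℕ):ℤ))
      (fun p h1 h2 => hadj p h1 (by omega) (by omega))
  have hmono_high : ∀ x y : ℤ, ((n - l:ℕ):ℤ) + 1 ≤ x → x < y → y ≤ (n:ℤ) → α' x < α' y :=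
    mono_of_adj (f := (α' : ℤ → ℤ)) (a := ((n - l:ℕ):ℤ) + 1) (b := (n:ℤ))
      (fun p h1 h2 => hadj p (by omega) h2 (by omega))
  -- identification of α' on the lower block
  have hFG : (fun q : Fin (n - l) => α' (((q:ℕ):ℤ) + 1))
      = (fun q : Fin (n - l) => ((j q : ℕ):ℤ)) := by
    refine fin_eq_of_range_subset ?_ ?_ ?_
    · intro q q' hqq
      have hv : (q:ℕ) < (q':ℕ) := hqq
      have hlt : ((q':ℕ):ℤ) < ((n - l:ℕ):ℤ) := by exact_mod_cast q'.isLt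
      exact hmono_low _ _ (by omega) (by omega) (by omega)
    · intro q q' hqq
      have hjlt : (j q : ℕ) < j q' := hj hqq
      show ((j q : ℕ):ℤ) < ((j q' : ℕ):ℤ)
      exact_mod_cast hjlt
    · rintro v ⟨q, rfl⟩
      have hlt : ((q:ℕ):ℤ) < ((n - l:ℕ):ℤ) := by exact_mod_cast q.isLt
      obtain ⟨k, hk⟩ := hstar (((q:ℕ):ℤ) + 1) (by omega) (by omega)
      exact ⟨k, hk.symm⟩
  have hα'val : ∀ z : ℤ, 1 ≤ z → z ≤ ((n - l:ℕ):ℤ) → ∀ k : Fin (n - l),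
      ((k:ℕ):ℤ) = z - 1 → α' z = ((j k : ℕ):ℤ) := by
    intro z h1 h2 k hkz
    have hc := congrFun hFG k
    rw [show ((k:ℕ):ℤ) + 1 = z by omega] at hc
    exact hc
  -- the permutations u = α' * a (n-l) and v = prodR j
  have haW : a (n - l) ∈ W n := a_mem (Nat.sub_le n l)
  have huW : α' * a (n - l) ∈ W n := mul_mem hα'W haW
  have hulow : ∀ z : ℤ, 1 ≤ z → z ≤ ((n - l:ℕ):ℤ) →
      (α' * a (n - l)) z = prodR j z ∧ (α' * a (n - l)) z < 0 := by
    intro z h1 h2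
    have haz : a (n - l) z = z - (((n - l:ℕ):ℤ) + 1) := by
      rw [a_apply, if_pos ⟨h1, h2⟩]
    have hneg : (α' * a (n - l)) z = -(α' (((n - l:ℕ):ℤ) + 1 - z)) := by
      simp only [Equiv.Perm.mul_apply]
      rw [haz, show z - (((n - l:ℕ):ℤ) + 1) = -(((n - l:ℕ):ℤ) + 1 - z) by ring, hα'W.1]
    set k : Fin (n - l) := ⟨(((n - l:ℕ):ℤ) - z).toNat, by omega⟩ with hkdef
    have hkval : ((k:ℕ):ℤ) = ((n - l:ℕ):ℤ) - z := by
      have hv : (k:ℕ) = (((n - l:ℕ):ℤ) - z).toNat := rfl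
      omega
    have hαv : α' (((n - l:ℕ):ℤ) + 1 - z) = ((j k : ℕ):ℤ) :=
      hα'val _ (by omega) (by omega) k (by omega)
    have hpj := hbj k
    rw [show ((n - l:ℕ):ℤ) - ((k:ℕ):ℤ) = z by omega] at hpj
    have hj1k : 1 ≤ (j k : ℕ) := (hj1 k).1
    constructor
    · rw [hneg, hαv, hpj]
    · rw [hneg, hαv]; omega
  have hutop : ∀ z : ℤ, ((n - l:ℕ):ℤ) + 1 ≤ z → (α' * a (n - l)) z = α' z := by
    intro z h1
    simp only [Equiv.Perm.mul_apply]
    rw [a_apply, if_neg (by omega), if_neg (by omega)]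
  have himgu := image_upper (n := n) (M := ((n - l:ℕ):ℤ)) (by omega) hMn huW
    (fun z h1 h2 => (hulow z h1 h2).2)
    (fun z h1 h2 => by rw [hutop z h1]; exact (hα'pos z (by omega) h2).1)
  have himgv := image_upper (n := n) (M := ((n - l:ℕ):ℤ)) (by omega) hMn hvjW
    (fun z h1 h2 => by rw [← (hulow z h1 h2).1]; exact (hulow z h1 h2).2)
    (fun z h1 h2 => by have := (hbdj z h1).1; omega)
  have hsetseq : (fun z => -((α' * a (n - l)) z)) '' Set.Icc 1 ((n - l:ℕ):ℤ)
      = (fun z => -(prodR j z)) '' Set.Icc 1 ((n - l:ℕ):ℤ) := by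
    apply Set.image_congr
    intro z hz
    rw [Set.mem_Icc] at hz
    rw [(hulow z hz.1 hz.2).1]
  have himeq : (α' * a (n - l)) '' Set.Icc (((n - l:ℕ):ℤ) + 1) (n:ℤ)
      = prodR j '' Set.Icc (((n - l:ℕ):ℤ) + 1) (n:ℤ) := by
    rw [himgu, himgv, hsetseq]
  have hupper_eq : ∀ z : ℤ, ((n - l:ℕ):ℤ) + 1 ≤ z → z ≤ (n:ℤ) →
      (α' * a (n - l)) z = prodR j z := by
    have hF2mono : StrictMono
        (fun q : Fin l => (α' * a (n - l)) (((n - l:ℕ):ℤ) + 1 + ((q:ℕ):ℤ))) := by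
      intro q q' hqq
      have hv : (q:ℕ) < (q':ℕ) := hqq
      have hlt : ((q':ℕ):ℤ) < (l:ℤ) := by exact_mod_cast q'.isLt
      simp only
      rw [hutop _ (by omega), hutop _ (by omega)]
      exact hmono_high _ _ (by omega) (by omega) (by omega)
    have hG2mono : StrictMono
        (fun q : Fin l => prodR j (((n - l:ℕ):ℤ) + 1 + ((q:ℕ):ℤ))) := by
      intro q q' hqq
      have hv : (q:ℕ) < (q':ℕ) := hqq
      exact hmj _ _ (by omega) (by omega)
    have hr : Set.range (fun q : Fin l => (α' * a (n - l)) (((n - l:ℕ):ℤ) + 1 + ((q:ℕ):ℤ)))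
        ⊆ Set.range (fun q : Fin l => prodR j (((n - l:ℕ):ℤ) + 1 + ((q:ℕ):ℤ))) := by
      rintro v ⟨q, rfl⟩
      have hlt : ((q:ℕ):ℤ) < (l:ℤ) := by exact_mod_cast q.isLt
      have hmem : (α' * a (n - l)) (((n - l:ℕ):ℤ) + 1 + ((q:ℕ):ℤ))
          ∈ (α' * a (n - l)) '' Set.Icc (((n - l:ℕ):ℤ) + 1) (n:ℤ) := by
        refine ⟨_, ?_, rfl⟩
        rw [Set.mem_Icc]
        omega
      rw [himeq] at hmem
      obtain ⟨z, hzIcc, hzeq⟩ := hmem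
      rw [Set.mem_Icc] at hzIcc
      refine ⟨⟨(z - (((n - l:ℕ):ℤ) + 1)).toNat, by omega⟩, ?_⟩
      simp only
      have hvval : ((⟨(z - (((n - l:ℕ):ℤ) + 1)).toNat, by omega⟩ : Fin l) : ℕ)
          = (z - (((n - l:ℕ):ℤ) + 1)).toNat := rfl
      rw [show ((n - l:ℕ):ℤ) + 1 + ((((⟨(z - (((n - l:ℕ):ℤ) + 1)).toNat, by omega⟩ : Fin l)) : ℕ):ℤ) = z by rw [hvval]; omega]
      exact hzeq
    have hFG2 := fin_eq_of_range_subset hF2mono hG2mono hr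
    intro z h1 h2
    set q : Fin l := ⟨(z - (((n - l:ℕ):ℤ) + 1)).toNat, by omega⟩ with hqdef
    have hqval : ((q:ℕ):ℤ) = z - (((n - l:ℕ):ℤ) + 1) := by
      have hv : (q:ℕ) = (z - (((n - l:ℕ):ℤ) + 1)).toNat := rfl
      omega
    have hc := congrFun hFG2 q
    rw [show ((n - l:ℕ):ℤ) + 1 + ((q:ℕ):ℤ) = z by omega] at hc
    exact hc
  refine w_eq_of_agree huW hvjW ?_
  intro x h1 h2
  by_cases hx : x ≤ ((n - l:ℕ):ℤ)
  · exact (hulow x h1 hx).1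
  · exact hupper_eq x (by omega) h2


end TypeB
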